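/- Spearman's footrule distance and Kendall distance satisfy d_K(π,ν) ≤ d_S(π,ν) ≤ 2·d_K(π,ν), where d_S(π,ν) = Σ_i |π(i) - ν(i)| and d_K is the number of discordant pairs. -/

import Mathlib

open Finset Equiv

def kendallDist {n : ℕ} (π ν : Equiv.Perm (Fin n)) : ℕ :=
  (Finset.univ.filter (fun p : Fin n × Fin n => p.1 < p.2 ∧
    (((π p.1 : ℕ) : ℤ) - ((π p.2 : ℕ) : ℤ)) * (((ν p.1 : ℕ) : ℤ) - ((ν p.2 : ℕ) : ℤ)) < 0)).card

namespace DG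

variable {n : ℕ}

abbrev dsc (π ν : Equiv.Perm (Fin n)) (u v : Fin n) : Prop :=
  (((π u : ℕ) : ℤ) - ((π v : ℕ) : ℤ)) * (((ν u : ℕ) : ℤ) - ((ν v : ℕ) : ℤ)) < 0

lemma dsc_symm {π ν : Equiv.Perm (Fin n)} {u v : Fin n} (h : dsc π ν u v) : dsc π ν v u := by
  unfold dsc at *; nlinarith

lemma dsc_ne {π ν : Equiv.Perm (Fin n)} {u v : Fin n} (h : dsc π ν u v) : u ≠ v := by
  rintro rfl; unfold dsc at h; simp at h

lemma kendall_eq (π ν : Equiv.Perm (Fin n)) : kendallDist π ν =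
    (univ.filter (fun p : Fin n × Fin n => p.1 < p.2 ∧ dsc π ν p.1 p.2)).card := by
  unfold kendallDist dsc
  congr 1

def Isym (π ν : Equiv.Perm (Fin n)) : ℕ :=
  (univ.filter (fun p : Fin n × Fin n => dsc π ν p.1 p.2)).card

lemma isym_eq (π ν : Equiv.Perm (Fin n)) : Isym π ν = 2 * kendallDist π ν := by
  classical
  rw [kendall_eq]
  unfold Isym
  rw [← Finset.card_filter_add_card_filter_not
      (p := fun p : Fin n × Fin n => p.1 < p.2) (s := univ.filter (fun p : Fin n × Fin n => dsc π ν p.1 p.2))]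
  rw [Finset.filter_filter, Finset.filter_filter]
  have h1 : (univ.filter fun p : Fin n × Fin n => dsc π ν p.1 p.2 ∧ p.1 < p.2)
      = (univ.filter fun p : Fin n × Fin n => p.1 < p.2 ∧ dsc π ν p.1 p.2) := by
    apply Finset.filter_congr; intro p _; tauto
  rw [h1]
  have h2 : (univ.filter fun p : Fin n × Fin n => dsc π ν p.1 p.2 ∧ ¬ p.1 < p.2).card
      = (univ.filter fun p : Fin n × Fin n => p.1 < p.2 ∧ dsc π ν p.1 p.2).card := by
    apply Finset.card_nbij' (fun p => (p.2, p.1)) (fun p => (p.2, p.1)) <;>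
      simp only [Finset.mem_filter, Finset.mem_univ, true_and, Finset.mem_coe, Set.MapsTo,
        Set.LeftInvOn, Set.RightInvOn]
    · rintro ⟨a, b⟩ ⟨hd, hlt⟩
      exact ⟨lt_of_le_of_ne (not_lt.mp hlt) (dsc_ne hd).symm, dsc_symm hd⟩
    · rintro ⟨a, b⟩ ⟨hlt, hd⟩
      exact ⟨dsc_symm hd, not_lt.mpr hlt.le⟩
    · intro p _; trivial
    · intro p _; trivial
  rw [h2]; ring

lemma isym_inv (π ν : Equiv.Perm (Fin n)) : Isym π ν = Isym (π * ν⁻¹) 1 := by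
  unfold Isym
  apply Finset.card_nbij' (fun p => (ν p.1, ν p.2)) (fun p => (ν⁻¹ p.1, ν⁻¹ p.2)) <;>
    simp only [Finset.mem_filter, Finset.mem_univ, true_and, dsc, Equiv.Perm.mul_apply,
      Equiv.Perm.one_apply,
      Finset.mem_coe, Set.MapsTo, Set.LeftInvOn, Set.RightInvOn, Set.mem_setOf_eq]
  · intro p h; exact Finset.mem_filter.mpr ⟨Finset.mem_univ _, by simpa using h⟩
  · intro p h; simpa using (Finset.mem_filter.mp h).2
  · intro p _; simp
  · intro p _; simp

lemma kendall_inv (π ν : Equiv.Perm (Fin n)) : kendallDist π ν = kendallDist (π * ν⁻¹) 1 := by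
  have := isym_inv π ν
  rw [isym_eq, isym_eq] at this
  omega

lemma footrule_inv (π ν : Equiv.Perm (Fin n)) :
    (∑ i : Fin n, |((π i : ℕ) : ℤ) - ((ν i : ℕ) : ℤ)|)
      = ∑ i : Fin n, |(((π * ν⁻¹) i : ℕ) : ℤ) - ((i : ℕ) : ℤ)| := by
  have := Equiv.sum_comp ν (fun i : Fin n => |(((π (ν⁻¹ i)) : ℕ) : ℤ) - ((i : ℕ) : ℤ)|)
  simp only [Equiv.Perm.coe_inv, Equiv.symm_apply_apply] at this
  rw [this]
  simp [Equiv.Perm.mul_apply]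


lemma card_filter_prod (Q : Fin n → Fin n → Prop) [∀ u v, Decidable (Q u v)] :
    (univ.filter (fun p : Fin n × Fin n => Q p.1 p.2)).card
      = ∑ u : Fin n, (univ.filter (fun v => Q u v)).card := by
  rw [Finset.card_eq_sum_card_fiberwise (f := Prod.fst) (t := univ) (fun x _ => mem_univ _)]
  refine Finset.sum_congr rfl (fun u _ => ?_)
  apply Finset.card_nbij' (fun p => p.2) (fun v => (u, v))
  · rintro ⟨a, b⟩ hab
    simp only [Finset.mem_filter, Finset.mem_univ, true_and, Finset.mem_coe] at *
    obtain ⟨hq, h1⟩ := hab; subst h1; exact hq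
  · intro v hv
    simp only [Finset.mem_filter, Finset.mem_univ, true_and, Finset.mem_coe] at *
    simp_all
  · rintro ⟨a, b⟩ hab
    simp only [Finset.mem_filter, Finset.mem_univ, true_and, Finset.mem_coe] at hab
    obtain ⟨hq, h1⟩ := hab; subst h1; rfl
  · intro v _; rfl

lemma card_sigma_gt (σ : Equiv.Perm (Fin n)) (u : Fin n) :
    (univ.filter (fun v => σ u < σ v)).card = n - 1 - (σ u : ℕ) := by
  rw [← Fin.card_Ioi (σ u)]
  apply Finset.card_nbij (fun v => σ v)
  · intro v hv; simp only [mem_filter, mem_univ, true_and, Finset.mem_coe] at hv; simpa [Finset.mem_Ioi]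
  · intro a _ b _ h; exact σ.injective h
  · intro w hw
    simp only [Finset.coe_filter, Set.mem_image, Finset.mem_Ioi, Finset.mem_coe] at *
    exact ⟨σ⁻¹ w, by simpa using hw, by simp⟩

lemma card_sigma_lt (σ : Equiv.Perm (Fin n)) (u : Fin n) :
    (univ.filter (fun v => σ v < σ u)).card = (σ u : ℕ) := by
  rw [← Fin.card_Iio (σ u)]
  apply Finset.card_nbij (fun v => σ v)
  · intro v hv; simp only [mem_filter, mem_univ, true_and, Finset.mem_coe] at hv; simpa [Finset.mem_Iio]
  · intro a _ b _ h; exact σ.injective h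
  · intro w hw
    simp only [Finset.coe_filter, Set.mem_image, Finset.mem_Iio, Finset.mem_coe] at *
    exact ⟨σ⁻¹ w, by simpa using hw, by simp⟩

lemma abs_le_dsc_card (σ : Equiv.Perm (Fin n)) (u : Fin n) :
    |((σ u : ℕ) : ℤ) - ((u : ℕ) : ℤ)| ≤ ((univ.filter (fun v => dsc σ 1 u v)).card : ℤ) := by
  classical
  set R := univ.filter (fun v => u < v ∧ σ v < σ u) with hR
  set L := univ.filter (fun v => v < u ∧ σ u < σ v) with hL
  have hsplit : (univ.filter (fun v => dsc σ 1 u v)) = R ∪ L := by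
    ext v
    simp only [hR, hL, mem_union, mem_filter, mem_univ, true_and, dsc,
      Equiv.Perm.one_apply, Fin.lt_def, mul_neg_iff]
    omega
  have hdisj : Disjoint R L := by
    rw [Finset.disjoint_left]
    intro v hv hv'
    simp only [hR, hL, mem_filter] at hv hv'
    exact absurd hv.2.1 (not_lt.mpr hv'.2.1.le)
  have hcard : (univ.filter (fun v => dsc σ 1 u v)).card = R.card + L.card := by
    rw [hsplit, Finset.card_union_of_disjoint hdisj]
  -- bound 1
  have hsub1 : (univ.filter (fun v : Fin n => u < v)) ⊆ R ∪ (univ.filter (fun v => σ u < σ v)) := by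
    intro v hv
    simp only [mem_filter, mem_univ, true_and] at hv
    have hne : σ v ≠ σ u := fun h => absurd (σ.injective h) (ne_of_gt hv)
    rcases lt_or_gt_of_ne hne with h | h
    · exact Finset.mem_union_left _ (by simp [hR, hv, h])
    · exact Finset.mem_union_right _ (by simp [h])
  have hb1 : n - 1 - (u : ℕ) ≤ R.card + (n - 1 - (σ u : ℕ)) := by
    have := Finset.card_le_card hsub1
    have h2 := Finset.card_union_le R (univ.filter (fun v => σ u < σ v))
    have h3 : (univ.filter (fun v : Fin n => u < v)) = Finset.Ioi u := by
      ext v; simp [Finset.mem_Ioi]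
    rw [h3, Fin.card_Ioi] at this
    rw [card_sigma_gt] at h2
    omega
  -- bound 2
  have hsub2 : (univ.filter (fun v : Fin n => v < u)) ⊆ L ∪ (univ.filter (fun v => σ v < σ u)) := by
    intro v hv
    simp only [mem_filter, mem_univ, true_and] at hv
    have hne : σ v ≠ σ u := fun h => absurd (σ.injective h) (ne_of_lt hv)
    rcases lt_or_gt_of_ne hne with h | h
    · exact Finset.mem_union_right _ (by simp [h])
    · exact Finset.mem_union_left _ (by simp [hL, hv, h])
  have hb2 : (u : ℕ) ≤ L.card + (σ u : ℕ) := by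
    have := Finset.card_le_card hsub2
    have h2 := Finset.card_union_le L (univ.filter (fun v => σ v < σ u))
    have h3 : (univ.filter (fun v : Fin n => v < u)) = Finset.Iio u := by
      ext v; simp [Finset.mem_Iio]
    rw [h3, Fin.card_Iio] at this
    rw [card_sigma_lt] at h2
    omega
  have hu : (u : ℕ) < n := u.isLt
  have hsu : (σ u : ℕ) < n := (σ u).isLt
  rw [abs_sub_le_iff]
  constructor <;> [skip; skip] <;> rw [hcard] <;> push_cast <;> omega

lemma footrule_le_two_kendall (σ : Equiv.Perm (Fin n)) :
    (∑ i : Fin n, |((σ i : ℕ) : ℤ) - ((i : ℕ) : ℤ)|) ≤ 2 * (kendallDist σ 1 : ℤ) := by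
  have h1 : (∑ i : Fin n, |((σ i : ℕ) : ℤ) - ((i : ℕ) : ℤ)|)
      ≤ ∑ u : Fin n, ((univ.filter (fun v => dsc σ 1 u v)).card : ℤ) :=
    Finset.sum_le_sum (fun u _ => abs_le_dsc_card σ u)
  have h2 : (∑ u : Fin n, ((univ.filter (fun v => dsc σ 1 u v)).card : ℤ)) = (Isym σ 1 : ℤ) := by
    rw [Isym, card_filter_prod (fun u v => dsc σ 1 u v)]
    push_cast
    rfl
  have h3 : (Isym σ 1 : ℤ) = 2 * (kendallDist σ 1 : ℤ) := by
    exact_mod_cast congrArg (Nat.cast : ℕ → ℤ) (isym_eq σ 1)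
  linarith


lemma mul_neg_iff_lt {A B C D : ℤ} (h : C < D) : (A - B) * (C - D) < 0 ↔ B < A := by
  rw [mul_neg_iff]; omega

lemma dsc_one_iff {σ : Equiv.Perm (Fin n)} {u v : Fin n} (h : (u : ℕ) < (v : ℕ)) :
    dsc σ 1 u v ↔ (σ v : ℕ) < (σ u : ℕ) := by
  unfold dsc
  simp only [Equiv.Perm.one_apply]
  rw [mul_neg_iff_lt (by exact_mod_cast h)]
  exact Nat.cast_lt

def Dz1 (σ : Equiv.Perm (Fin n)) : ℤ := ∑ m : Fin n, |((σ m : ℕ) : ℤ) - ((m : ℕ) : ℤ)|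

set_option maxHeartbeats 1000000 in
lemma step (σ : Equiv.Perm (Fin n)) (hσ : σ ≠ 1) :
    ∃ σ' : Equiv.Perm (Fin n), σ'.support.card < σ.support.card ∧
      (kendallDist σ 1 : ℤ) + Dz1 σ' ≤ (kendallDist σ' 1 : ℤ) + Dz1 σ := by
  have hne : σ.support.Nonempty := by
    rwa [Finset.nonempty_iff_ne_empty, Ne, Equiv.Perm.support_eq_empty_iff]
  set i := σ.support.min' hne with hidef
  have hi : σ i ≠ i := Equiv.Perm.mem_support.mp (σ.support.min'_mem hne)
  have hmin : ∀ m : Fin n, m < i → σ m = m := by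
    intro m hm
    by_contra hc
    exact absurd (σ.support.min'_le m (Equiv.Perm.mem_support.mpr hc)) (not_le.mpr hm)
  have hia : i < σ i := by
    rcases lt_trichotomy (σ i) i with h | h | h
    · exact absurd (σ.injective (hmin _ h)) hi
    · exact absurd h hi
    · exact h
  set j := σ⁻¹ i with hjdef
  have hji : σ j = i := σ.apply_symm_apply i
  have hjne : j ≠ i := by
    intro h; rw [h] at hji; exact hi hji
  have hij : i < j := by
    rcases lt_trichotomy j i with h | h | h
    · have h2 : i = j := by rw [← hji, hmin j h]
      exact absurd h2.symm (ne_of_lt h)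
    · exact absurd h hjne
    · exact h
  have hgt : ∀ m : Fin n, i < m → m ≠ j → i < σ m := by
    intro m him hmj
    rcases lt_trichotomy (σ m) i with h | h | h
    · exfalso
      have h2 : σ m = m := σ.injective (hmin _ h)
      rw [h2] at h
      exact absurd him (not_lt.mpr h.le)
    · exact absurd (σ.injective (h.symm ▸ hji.symm : σ m = σ j)) hmj
    · exact h
  set τ := Equiv.swap i j with hτdef
  set σ' := σ * τ with hσ'def
  have hτi : τ i = j := Equiv.swap_apply_left i j
  have hτj : τ j = i := Equiv.swap_apply_right i j
  have hτm : ∀ m : Fin n, m ≠ i → m ≠ j → τ m = m :=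
    fun m h1 h2 => Equiv.swap_apply_of_ne_of_ne h1 h2
  have hτρ : ∀ m : Fin n, τ (τ m) = m := fun m => Equiv.swap_apply_self i j m
  have hσ'app : ∀ p : Fin n, σ' p = σ (τ p) := fun p => Equiv.Perm.mul_apply σ τ p
  have hσ'i : σ' i = i := by rw [hσ'app, hτi, hji]
  have hσ'j : σ' j = σ i := by rw [hσ'app, hτj]
  have hσ'm : ∀ m : Fin n, m ≠ i → m ≠ j → σ' m = σ m := by
    intro m h1 h2; rw [hσ'app, hτm m h1 h2]
  have hsupp : σ'.support.card < σ.support.card := by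
    have hsub : σ'.support ⊆ σ.support.erase i := by
      intro m hm
      rw [Equiv.Perm.mem_support] at hm
      rcases eq_or_ne m i with rfl | hmi
      · exact absurd hσ'i hm
      rcases eq_or_ne m j with rfl | hmj
      · exact Finset.mem_erase.mpr ⟨hjne, Equiv.Perm.mem_support.mpr (by rw [hji]; exact fun h => hjne h.symm)⟩
      · exact Finset.mem_erase.mpr ⟨hmi, Equiv.Perm.mem_support.mpr (by rwa [← hσ'm m hmi hmj])⟩
    calc σ'.support.card ≤ (σ.support.erase i).card := Finset.card_le_card hsub
      _ < σ.support.card := Finset.card_erase_lt_of_mem (σ.support.min'_mem hne)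
  clear_value σ' τ j i
  set S1 := univ.filter (fun p : Fin n × Fin n => p.1 < p.2 ∧ dsc σ 1 p.1 p.2) with hS1
  set S2 := univ.filter (fun p : Fin n × Fin n => p.1 < p.2 ∧ dsc σ' 1 p.1 p.2) with hS2
  set T := univ.filter (fun p : Fin n × Fin n => p.1 < p.2 ∧ dsc σ 1 (τ p.1) (τ p.2)) with hT
  set Fl := univ.filter (fun p : Fin n × Fin n => p.1 < p.2 ∧ τ p.2 < τ p.1) with hFl
  set SF := Fl.filter (fun p => dsc σ' 1 p.1 p.2) with hSF
  set TF := Fl.filter (fun p => ¬ dsc σ' 1 p.1 p.2) with hTF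
  -- step 1 : S1.card = T.card
  have hcard1 : S1.card = T.card := by
    apply Finset.card_nbij'
      (fun p => if τ p.1 < τ p.2 then (τ p.1, τ p.2) else (τ p.2, τ p.1))
      (fun p => if τ p.1 < τ p.2 then (τ p.1, τ p.2) else (τ p.2, τ p.1))
    · intro p hp
      simp only [hS1, Finset.mem_filter, Finset.mem_univ, true_and, Finset.mem_coe] at hp
      obtain ⟨h12, hd⟩ := hp
      by_cases hc : τ p.1 < τ p.2
      · beta_reduce; rw [if_pos hc]
        simp only [hT, Finset.mem_filter, Finset.mem_univ, true_and, Finset.mem_coe]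
        exact ⟨hc, by rw [hτρ, hτρ]; exact hd⟩
      · beta_reduce; rw [if_neg hc]
        have hne2 : τ p.2 ≠ τ p.1 := fun h => (ne_of_lt h12) (τ.injective h.symm)
        simp only [hT, Finset.mem_filter, Finset.mem_univ, true_and, Finset.mem_coe]
        exact ⟨lt_of_le_of_ne (not_lt.mp hc) hne2, by rw [hτρ, hτρ]; exact dsc_symm hd⟩
    · intro p hp
      simp only [hT, Finset.mem_filter, Finset.mem_univ, true_and, Finset.mem_coe] at hp
      obtain ⟨h12, hd⟩ := hp
      by_cases hc : τ p.1 < τ p.2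
      · beta_reduce; rw [if_pos hc]
        simp only [hS1, Finset.mem_filter, Finset.mem_univ, true_and, Finset.mem_coe]
        exact ⟨hc, hd⟩
      · beta_reduce; rw [if_neg hc]
        have hne2 : τ p.2 ≠ τ p.1 := fun h => (ne_of_lt h12) (τ.injective h.symm)
        simp only [hS1, Finset.mem_filter, Finset.mem_univ, true_and, Finset.mem_coe]
        exact ⟨lt_of_le_of_ne (not_lt.mp hc) hne2, dsc_symm hd⟩
    · intro p hp
      simp only [hS1, Finset.mem_filter, Finset.mem_univ, true_and, Finset.mem_coe] at hp
      have h12 := hp.1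
      by_cases hc : τ p.1 < τ p.2
      · beta_reduce; rw [if_pos hc]
        have hcc : τ (τ p.1) < τ (τ p.2) := by rw [hτρ, hτρ]; exact h12
        rw [if_pos hcc, hτρ, hτρ]
      · beta_reduce; rw [if_neg hc]
        have hcc : ¬ τ (τ p.2) < τ (τ p.1) := by rw [hτρ, hτρ]; exact not_lt.mpr h12.le
        rw [if_neg hcc, hτρ, hτρ]
    · intro p hp
      simp only [hT, Finset.mem_filter, Finset.mem_univ, true_and, Finset.mem_coe] at hp
      have h12 := hp.1
      by_cases hc : τ p.1 < τ p.2
      · beta_reduce; rw [if_pos hc]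
        have hcc : τ (τ p.1) < τ (τ p.2) := by rw [hτρ, hτρ]; exact h12
        rw [if_pos hcc, hτρ, hτρ]
      · beta_reduce; rw [if_neg hc]
        have hcc : ¬ τ (τ p.2) < τ (τ p.1) := by rw [hτρ, hτρ]; exact not_lt.mpr h12.le
        rw [if_neg hcc, hτρ, hτρ]
  -- step 2 : T \ Fl = S2 \ Fl
  have hTFeq : T \ Fl = S2 \ Fl := by
    ext p
    simp only [hT, hS2, hFl, Finset.mem_sdiff, Finset.mem_filter, Finset.mem_univ, true_and]
    constructor
    · rintro ⟨⟨h12, hd⟩, hn⟩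
      have hnf : ¬ τ p.2 < τ p.1 := fun hf => hn ⟨h12, hf⟩
      have hne2 : τ p.1 ≠ τ p.2 := fun h => (ne_of_lt h12) (τ.injective h)
      have hlt : (τ p.1 : ℕ) < (τ p.2 : ℕ) := Fin.lt_def.mp (lt_of_le_of_ne (not_lt.mp hnf) hne2)
      rw [dsc_one_iff hlt] at hd
      rw [← hσ'app, ← hσ'app] at hd
      refine ⟨⟨h12, ?_⟩, fun hf => hnf hf.2⟩
      exact (dsc_one_iff (Fin.lt_def.mp h12)).mpr hd
    · rintro ⟨⟨h12, hd⟩, hn⟩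
      have hnf : ¬ τ p.2 < τ p.1 := fun hf => hn ⟨h12, hf⟩
      have hne2 : τ p.1 ≠ τ p.2 := fun h => (ne_of_lt h12) (τ.injective h)
      have hlt : (τ p.1 : ℕ) < (τ p.2 : ℕ) := Fin.lt_def.mp (lt_of_le_of_ne (not_lt.mp hnf) hne2)
      rw [dsc_one_iff (Fin.lt_def.mp h12)] at hd
      refine ⟨⟨h12, ?_⟩, fun hf => hnf hf.2⟩
      rw [dsc_one_iff hlt, ← hσ'app, ← hσ'app]
      exact hd
  -- step 3 : T ∩ Fl = TF
  have hTFl : T ∩ Fl = TF := by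
    ext p
    simp only [hT, hFl, hTF, Finset.mem_inter, Finset.mem_filter, Finset.mem_univ, true_and]
    constructor
    · rintro ⟨⟨h12, hd⟩, -, hf⟩
      refine ⟨⟨h12, hf⟩, ?_⟩
      have hd2 := dsc_symm hd
      rw [dsc_one_iff (Fin.lt_def.mp hf)] at hd2
      rw [← hσ'app, ← hσ'app] at hd2
      intro hd'
      rw [dsc_one_iff (Fin.lt_def.mp h12)] at hd'
      omega
    · rintro ⟨⟨h12, hf⟩, hnd⟩
      refine ⟨⟨h12, ?_⟩, h12, hf⟩
      have hne' : σ' p.1 ≠ σ' p.2 := fun h => (ne_of_lt h12) (σ'.injective h)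
      have hnv : (σ' p.1 : ℕ) ≠ (σ' p.2 : ℕ) := fun h => hne' (Fin.val_injective h)
      have hnlt : ¬ (σ' p.2 : ℕ) < (σ' p.1 : ℕ) := fun h => hnd ((dsc_one_iff (Fin.lt_def.mp h12)).mpr h)
      have h2 : (σ' p.1 : ℕ) < (σ' p.2 : ℕ) := by omega
      apply dsc_symm
      rw [dsc_one_iff (Fin.lt_def.mp hf)]
      rw [← hσ'app, ← hσ'app]
      exact h2
  -- step 4 : SF = S2 ∩ Fl
  have hSFl : S2 ∩ Fl = SF := by
    ext p
    simp only [hS2, hFl, hSF, Finset.mem_inter, Finset.mem_filter, Finset.mem_univ, true_and]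
    tauto
  -- key card identity
  have key : S1.card + 2 * SF.card = S2.card + Fl.card := by
    have e1 : (T \ Fl).card + (T ∩ Fl).card = T.card := Finset.card_sdiff_add_card_inter T Fl
    have e2 : (S2 \ Fl).card + (S2 ∩ Fl).card = S2.card := Finset.card_sdiff_add_card_inter S2 Fl
    have e3 : SF.card + TF.card = Fl.card := by
      rw [hSF, hTF]
      exact Finset.card_filter_add_card_filter_not _
    have c1 : (T \ Fl).card = (S2 \ Fl).card := by rw [hTFeq]
    have c2 : (T ∩ Fl).card = TF.card := by rw [hTFl]
    have c3 : (S2 ∩ Fl).card = SF.card := by rw [hSFl]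
    omega
  have hijn : (i : ℕ) < (j : ℕ) := Fin.lt_def.mp hij
  have hian : (i : ℕ) < (σ i : ℕ) := Fin.lt_def.mp hia
  -- Fl card bound
  have hFlcard : (Fl.card : ℤ) + 1 ≤ 2 * (((j : ℕ) : ℤ) - ((i : ℕ) : ℤ)) := by
    have hAB : Fl ⊆ ((Finset.Ioc i j).image (fun q => ((i, q) : Fin n × Fin n))) ∪
        ((Finset.Ico i j).image (fun q => ((q, j) : Fin n × Fin n))) := by
      intro p hp
      simp only [hFl, Finset.mem_filter, Finset.mem_univ, true_and] at hp
      obtain ⟨h12, hf⟩ := hp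
      rcases eq_or_ne p.1 i with h1i | h1i
      · refine Finset.mem_union_left _ ?_
        simp only [Finset.mem_image]
        refine ⟨p.2, Finset.mem_Ioc.mpr ⟨h1i ▸ h12, ?_⟩, by rw [← h1i]⟩
        rcases eq_or_ne p.2 j with h2j | h2j
        · exact le_of_eq h2j
        · have h2i : p.2 ≠ i := ne_of_gt (h1i ▸ h12)
          rw [h1i, hτi, hτm p.2 h2i h2j] at hf
          exact hf.le
      rcases eq_or_ne p.1 j with h1j | h1j
      · exfalso
        have hp2i : p.2 ≠ i := fun h => by
          rw [h1j, h] at h12; exact absurd (hij.trans h12) (lt_irrefl i)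
        have hp2j : p.2 ≠ j := fun h => by
          rw [h1j, h] at h12; exact lt_irrefl _ h12
        rw [h1j, hτj, hτm p.2 hp2i hp2j] at hf
        rw [h1j] at h12
        exact absurd (hij.trans (h12.trans hf)) (lt_irrefl i)
      rcases eq_or_ne p.2 i with h2i | h2i
      · exfalso
        rw [h2i] at h12
        have h1j' : p.1 ≠ j := fun h => by
          rw [h] at h12; exact absurd (hij.trans h12) (lt_irrefl i)
        rw [h2i, hτi, hτm p.1 h1i h1j'] at hf
        exact absurd ((h12.trans hij).trans hf) (lt_irrefl p.1)
      rcases eq_or_ne p.2 j with h2j | h2j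
      · refine Finset.mem_union_right _ ?_
        simp only [Finset.mem_image]
        refine ⟨p.1, Finset.mem_Ico.mpr ⟨?_, h2j ▸ h12⟩, by rw [← h2j]⟩
        rw [h2j, hτj, hτm p.1 h1i h1j] at hf
        exact hf.le
      · exfalso
        rw [hτm p.1 h1i h1j, hτm p.2 h2i h2j] at hf
        exact absurd (h12.trans hf) (lt_irrefl p.1)
    have hAcard : ((Finset.Ioc i j).image (fun q => ((i, q) : Fin n × Fin n))).card
        = (j : ℕ) - (i : ℕ) := by
      rw [Finset.card_image_of_injective _ (fun a b h => by simpa using h), Fin.card_Ioc]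
    have hBcard : ((Finset.Ico i j).image (fun q => ((q, j) : Fin n × Fin n))).card
        = (j : ℕ) - (i : ℕ) := by
      rw [Finset.card_image_of_injective _ (fun a b h => by simpa using h), Fin.card_Ico]
    have hmemAB : ((i, j) : Fin n × Fin n) ∈
        ((Finset.Ioc i j).image (fun q => ((i, q) : Fin n × Fin n))) ∩
        ((Finset.Ico i j).image (fun q => ((q, j) : Fin n × Fin n))) := by
      refine Finset.mem_inter.mpr ⟨?_, ?_⟩
      · exact Finset.mem_image.mpr ⟨j, Finset.mem_Ioc.mpr ⟨hij, le_refl j⟩, rfl⟩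
      · exact Finset.mem_image.mpr ⟨i, Finset.mem_Ico.mpr ⟨le_refl i, hij⟩, rfl⟩
    have h1 := Finset.card_union_add_card_inter
      ((Finset.Ioc i j).image (fun q => ((i, q) : Fin n × Fin n)))
      ((Finset.Ico i j).image (fun q => ((q, j) : Fin n × Fin n)))
    have h2 : 1 ≤ (((Finset.Ioc i j).image (fun q => ((i, q) : Fin n × Fin n))) ∩
        ((Finset.Ico i j).image (fun q => ((q, j) : Fin n × Fin n)))).card :=
      Finset.card_pos.mpr ⟨_, hmemAB⟩
    have h3 := Finset.card_le_card hAB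
    rw [hAcard, hBcard] at h1
    omega
  -- SF card bound
  have hSFcard : ((j : ℕ) : ℤ) ≤ (SF.card : ℤ) + ((σ i : ℕ) : ℤ) := by
    set V := univ.filter (fun m : Fin n => i < m ∧ m < j) with hV
    have hVcard : V.card = (j : ℕ) - (i : ℕ) - 1 := by
      have hVI : V = Finset.Ioo i j := by
        ext m; simp [hV, Finset.mem_Ioo]
      rw [hVI, Fin.card_Ioo]
    have hWX : (V.filter (fun m => σ i < σ m)).card
        + (V.filter (fun m => ¬ σ i < σ m)).card = V.card :=
      Finset.card_filter_add_card_filter_not _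
    have hXcard : (V.filter (fun m => ¬ σ i < σ m)).card ≤ (σ i : ℕ) - (i : ℕ) - 1 := by
      have hmap : ∀ m ∈ V.filter (fun m => ¬ σ i < σ m), σ m ∈ Finset.Ioo i (σ i) := by
        intro m hm
        simp only [hV, Finset.mem_filter, Finset.mem_univ, true_and, not_lt] at hm
        obtain ⟨⟨him, hmj⟩, hle⟩ := hm
        have h1 : i < σ m := hgt m him (ne_of_lt hmj)
        have h2 : σ m ≠ σ i := fun h => (ne_of_gt him) (σ.injective h)
        exact Finset.mem_Ioo.mpr ⟨h1, lt_of_le_of_ne hle h2⟩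
      calc (V.filter (fun m => ¬ σ i < σ m)).card ≤ (Finset.Ioo i (σ i)).card :=
            Finset.card_le_card_of_injOn (fun m => σ m) hmap (fun x _ y _ h => σ.injective h)
        _ = (σ i : ℕ) - (i : ℕ) - 1 := Fin.card_Ioo i (σ i)
    have hWsf : (V.filter (fun m => σ i < σ m)).card ≤ SF.card := by
      apply Finset.card_le_card_of_injOn (fun m => (m, j))
      · intro m hm
        simp only [hV, Finset.mem_filter, Finset.mem_univ, true_and, Finset.mem_coe] at hm
        obtain ⟨⟨him, hmj⟩, hlt⟩ := hm
        have hmi : m ≠ i := ne_of_gt him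
        have hmj' : m ≠ j := ne_of_lt hmj
        simp only [hSF, hFl, Finset.mem_filter, Finset.mem_univ, true_and, Finset.mem_coe]
        refine ⟨⟨hmj, ?_⟩, ?_⟩
        · rw [hτj, hτm m hmi hmj']; exact him
        · rw [dsc_one_iff (Fin.lt_def.mp hmj)]
          rw [hσ'j, hσ'm m hmi hmj']
          exact Fin.lt_def.mp hlt
      · intro x _ y _ h
        simpa using h
    omega
  -- Dz difference
  have hDz : Dz1 σ - Dz1 σ' = (((σ i : ℕ) : ℤ) - ((i : ℕ) : ℤ)) + (((j : ℕ) : ℤ) - ((i : ℕ) : ℤ))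
      - |((σ i : ℕ) : ℤ) - ((j : ℕ) : ℤ)| := by
    unfold Dz1
    rw [← Finset.sum_sub_distrib]
    have hvanish : ∀ m ∈ (univ : Finset (Fin n)), m ∉ ({i, j} : Finset (Fin n)) →
        (|((σ m : ℕ) : ℤ) - ((m : ℕ) : ℤ)| - |((σ' m : ℕ) : ℤ) - ((m : ℕ) : ℤ)|) = 0 := by
      intro m _ hm
      simp only [Finset.mem_insert, Finset.mem_singleton] at hm
      push_neg at hm
      rw [hσ'm m hm.1 hm.2]; ring
    rw [← Finset.sum_subset (Finset.subset_univ ({i, j} : Finset (Fin n))) hvanish]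
    rw [Finset.sum_pair (ne_of_lt hij)]
    rw [hσ'i, hσ'j, hji]
    have h1 : |((σ i : ℕ) : ℤ) - ((i : ℕ) : ℤ)| = ((σ i : ℕ) : ℤ) - ((i : ℕ) : ℤ) :=
      abs_of_nonneg (by omega)
    have h2 : |((i : ℕ) : ℤ) - ((i : ℕ) : ℤ)| = 0 := by simp
    have h3 : |((i : ℕ) : ℤ) - ((j : ℕ) : ℤ)| = ((j : ℕ) : ℤ) - ((i : ℕ) : ℤ) := by
      rw [abs_sub_comm]
      exact abs_of_nonneg (by omega)
    rw [h1, h2, h3]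
    ring
  -- final assembly
  refine ⟨σ', hsupp, ?_⟩
  have hk1 : kendallDist σ 1 = S1.card := by rw [hS1]; exact kendall_eq σ 1
  have hk2 : kendallDist σ' 1 = S2.card := by rw [hS2]; exact kendall_eq σ' 1
  rw [hk1, hk2]
  have keyZ : (S1.card : ℤ) + 2 * (SF.card : ℤ) = (S2.card : ℤ) + (Fl.card : ℤ) := by
    exact_mod_cast key
  rcases abs_cases (((σ i : ℕ) : ℤ) - ((j : ℕ) : ℤ)) with ⟨heq, hsgn⟩ | ⟨heq, hsgn⟩ <;>
    rw [heq] at hDz <;> omega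

theorem kendall_le_footrule (σ : Equiv.Perm (Fin n)) : (kendallDist σ 1 : ℤ) ≤ Dz1 σ := by
  generalize hk : σ.support.card = k
  induction k using Nat.strong_induction_on generalizing σ with
  | _ k ih =>
    by_cases h1 : σ = 1
    · subst h1
      have hk0 : kendallDist (1 : Equiv.Perm (Fin n)) 1 = 0 := by
        rw [kendall_eq, Finset.card_eq_zero, Finset.filter_eq_empty_iff]
        intro p _
        rintro ⟨-, hd⟩
        unfold dsc at hd
        simp only [Equiv.Perm.one_apply] at hd
        nlinarith [sq_nonneg (((p.1 : ℕ) : ℤ) - ((p.2 : ℕ) : ℤ))]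
      rw [hk0]
      exact Finset.sum_nonneg (fun m _ => abs_nonneg _)
    · obtain ⟨σ', hlt, hle⟩ := step σ h1
      have hind := ih σ'.support.card (hk ▸ hlt) σ' rfl
      linarith

end DG

/-- Diaconis–Graham inequality: `d_K(π,ν) ≤ d_S(π,ν) ≤ 2·d_K(π,ν)`, where
`d_S(π,ν) = Σ_i |π(i) - ν(i)|` is Spearman's footrule distance. -/
theorem diaconis_graham_inequality {n : ℕ} (π ν : Equiv.Perm (Fin n)) :
    (kendallDist π ν : ℤ) ≤ (∑ i : Fin n, |((π i : ℕ) : ℤ) - ((ν i : ℕ) : ℤ)|) ∧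
    (∑ i : Fin n, |((π i : ℕ) : ℤ) - ((ν i : ℕ) : ℤ)|) ≤ 2 * (kendallDist π ν : ℤ) := by
  have hk := DG.kendall_inv π ν
  have hf := DG.footrule_inv π ν
  constructor
  · rw [hk, hf]
    exact DG.kendall_le_footrule (π * ν⁻¹)
  · rw [hk, hf]
    exact DG.footrule_le_two_kendall (π * ν⁻¹)
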